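/- Let n₁,n₂ ≥ 2 and let M : M(n₁,n₂) → ℂ^m be a linear map. Then M restricted to the set M¹(n₁,n₂) of matrices of rank at most one is injective if and only if there exists a constant C > 0 such that ‖M(X)‖₂ ≥ C‖X‖_F for every X ∈ M(n₁,n₂) of rank at most 2 (i.e., M is stably (n₁,n₂)-injective). -/

import Mathlib

noncomputable section

/-- Frobenius norm of a complex matrix. -/
def frob {a b : ℕ} (X : Matrix (Fin a) (Fin b) ℂ) : ℝ :=
  Real.sqrt (∑ i, ∑ j, ‖X i j‖ ^ 2)

/-- Euclidean norm of a vector in `ℂ^m`. -/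
def l2 {m : ℕ} (v : Fin m → ℂ) : ℝ := Real.sqrt (∑ i, ‖v i‖ ^ 2)

lemma frob_nonneg {a b : ℕ} (X : Matrix (Fin a) (Fin b) ℂ) : 0 ≤ frob X :=
  Real.sqrt_nonneg _

lemma frob_eq_zero_iff {a b : ℕ} (X : Matrix (Fin a) (Fin b) ℂ) :
    frob X = 0 ↔ X = 0 := by
  constructor
  · intro h
    have hnn : (0:ℝ) ≤ ∑ i, ∑ j, ‖X i j‖ ^ 2 :=
      Finset.sum_nonneg fun i _ => Finset.sum_nonneg fun j _ => by positivity
    have hs : (∑ i, ∑ j, ‖X i j‖ ^ 2) = 0 := by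
      have := Real.sqrt_eq_zero hnn |>.mp h
      exact this
    ext i j
    have h1 := (Finset.sum_eq_zero_iff_of_nonneg (fun i _ =>
      Finset.sum_nonneg fun j _ => by positivity)).mp hs i (Finset.mem_univ i)
    have h2 := (Finset.sum_eq_zero_iff_of_nonneg (fun j _ => by positivity)).mp h1 j
      (Finset.mem_univ j)
    have : ‖X i j‖ = 0 := by nlinarith [norm_nonneg (X i j)]
    simpa using this
  · rintro rfl; simp [frob]

lemma frob_smul {a b : ℕ} (c : ℂ) (X : Matrix (Fin a) (Fin b) ℂ) :
    frob (c • X) = ‖c‖ * frob X := by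
  unfold frob
  rw [← Real.sqrt_sq (norm_nonneg c), ← Real.sqrt_mul (by positivity)]
  congr 1
  rw [Finset.mul_sum]
  refine Finset.sum_congr rfl fun i _ => ?_
  rw [Finset.mul_sum]
  refine Finset.sum_congr rfl fun j _ => ?_
  simp [norm_mul, mul_pow]

lemma l2_nonneg {m : ℕ} (v : Fin m → ℂ) : 0 ≤ l2 v := Real.sqrt_nonneg _

lemma l2_zero {m : ℕ} : l2 (0 : Fin m → ℂ) = 0 := by simp [l2]

lemma l2_eq_zero_iff {m : ℕ} (v : Fin m → ℂ) : l2 v = 0 ↔ v = 0 := by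
  constructor
  · intro h
    have hnn : (0:ℝ) ≤ ∑ i, ‖v i‖ ^ 2 := Finset.sum_nonneg fun i _ => by positivity
    have hs := (Real.sqrt_eq_zero hnn).mp h
    funext i
    have h1 := (Finset.sum_eq_zero_iff_of_nonneg (fun i _ => by positivity)).mp hs i
      (Finset.mem_univ i)
    have : ‖v i‖ = 0 := by nlinarith [norm_nonneg (v i)]
    simpa using this
  · rintro rfl; exact l2_zero

lemma l2_smul {m : ℕ} (c : ℂ) (v : Fin m → ℂ) : l2 (c • v) = ‖c‖ * l2 v := by
  unfold l2
  rw [← Real.sqrt_sq (norm_nonneg c), ← Real.sqrt_mul (by positivity)]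
  congr 1
  rw [Finset.mul_sum]
  refine Finset.sum_congr rfl fun i _ => ?_
  simp [norm_mul, mul_pow]

lemma continuous_frob {a b : ℕ} : Continuous fun X : Matrix (Fin a) (Fin b) ℂ => frob X := by
  apply Real.continuous_sqrt.comp
  apply continuous_finset_sum
  intro i _
  apply continuous_finset_sum
  intro j _
  exact (((continuous_apply j).comp (continuous_apply i)).norm).pow 2

lemma continuous_l2 {m : ℕ} : Continuous fun v : Fin m → ℂ => l2 v := by
  apply Real.continuous_sqrt.comp
  apply continuous_finset_sum
  intro i _
  exact ((continuous_apply i).norm).pow 2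

lemma rank_outer_le {a b : ℕ} (u : Fin a → ℂ) (w : Fin b → ℂ) :
    (Matrix.of fun i j => u i * w j).rank ≤ 1 := by
  rw [Matrix.rank]
  have hle : LinearMap.range (Matrix.of fun i j => u i * w j).mulVecLin ≤
      Submodule.span ℂ {u} := by
    rintro x ⟨v, rfl⟩
    rw [Submodule.mem_span_singleton]
    refine ⟨∑ j, w j * v j, ?_⟩
    funext i
    simp [Matrix.mulVecLin, Matrix.mulVec, dotProduct, Finset.sum_mul, Finset.mul_sum]
    ring_nf
    exact Finset.sum_congr rfl fun j _ => by ring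
  refine (Submodule.finrank_mono hle).trans ?_
  have : Module.finrank ℂ (Submodule.span ℂ ({u} : Set (Fin a → ℂ))) ≤ 1 := by
    classical
    simpa using finrank_span_le_card ({u} : Set (Fin a → ℂ))
  exact this

lemma rank_add_le' {a b : ℕ} (A B : Matrix (Fin a) (Fin b) ℂ) :
    (A + B).rank ≤ A.rank + B.rank := by
  rw [Matrix.rank, Matrix.rank, Matrix.rank]
  have hle : LinearMap.range (A + B).mulVecLin ≤
      LinearMap.range A.mulVecLin ⊔ LinearMap.range B.mulVecLin := by
    rintro x ⟨v, rfl⟩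
    rw [Matrix.mulVecLin_add]
    exact Submodule.mem_sup.mpr ⟨A.mulVecLin v, ⟨v, rfl⟩, B.mulVecLin v, ⟨v, rfl⟩, rfl⟩
  refine (Submodule.finrank_mono hle).trans ?_
  have := Submodule.finrank_sup_add_finrank_inf_eq (LinearMap.range A.mulVecLin)
    (LinearMap.range B.mulVecLin)
  omega

open scoped InnerProductSpace in
lemma decomp {n₁ n₂ : ℕ} (X : Matrix (Fin n₁) (Fin n₂) ℂ) (h : X.rank ≤ 2) :
    ∃ u : Fin 2 → EuclideanSpace ℂ (Fin n₁), ∃ w : Fin 2 → EuclideanSpace ℂ (Fin n₂),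
      (∀ i j, X i j = ∑ k, u k i * w k j) ∧ (∀ k, ‖u k‖ ≤ 1) ∧ (∀ k, ‖w k‖ ≤ frob X) := by
  classical
  set V := EuclideanSpace ℂ (Fin n₁)
  let cols : Fin n₂ → V := fun j => WithLp.toLp 2 (fun i => X i j : Fin n₁ → ℂ)
  set W : Submodule ℂ V := Submodule.span ℂ (Set.range cols) with hWdef
  have hcols : ∀ j, cols j ∈ W := fun j => Submodule.subset_span ⟨j, rfl⟩
  -- finrank bound
  have hW : Module.finrank ℂ W ≤ 2 := by
    rw [Matrix.rank_eq_finrank_span_cols] at h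
    let e : V ≃ₗ[ℂ] (Fin n₁ → ℂ) := WithLp.linearEquiv 2 ℂ (Fin n₁ → ℂ)
    have hmap : Submodule.map (e : V →ₗ[ℂ] (Fin n₁ → ℂ)) W
        = Submodule.span ℂ (Set.range X.col) := by
      rw [hWdef, Submodule.map_span]
      congr 1
      rw [← Set.range_comp]
      rfl
    have := LinearEquiv.finrank_map_eq e W
    rw [hmap] at this
    omega
  set d := Module.finrank ℂ W with hd
  have b : OrthonormalBasis (Fin d) ℂ W := stdOrthonormalBasis ℂ W
  let u : Fin 2 → V := fun k => if h : (k : ℕ) < d then ((b ⟨k.1, h⟩ : W) : V) else 0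
  have hu : ∀ k, ‖u k‖ ≤ 1 := by
    intro k
    by_cases hk : (k : ℕ) < d
    · simp only [u, dif_pos hk]
      rw [show ‖((b ⟨k.1, hk⟩ : W) : V)‖ = ‖b ⟨k.1, hk⟩‖ from rfl, b.orthonormal.1 _]
    · simp [u, dif_neg hk]
  have key : ∀ x ∈ W, ∑ k : Fin 2, (⟪u k, x⟫_ℂ) • u k = x := by
    intro x hx
    have hrep := b.sum_repr' (⟨x, hx⟩ : W)
    have hrep' : ∑ i : Fin d, (⟪((b i : W) : V), x⟫_ℂ) • ((b i : W) : V) = x := by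
      have := congrArg (Submodule.subtype W) hrep
      simpa [Submodule.coe_inner] using this
    set F : V → V := fun y => (⟪y, x⟫_ℂ) • y with hF
    have hF0 : F 0 = 0 := by simp [hF]
    set G : ℕ → V := fun n => if h : n < d then F ((b ⟨n, h⟩ : W) : V) else 0 with hG
    have h1 : ∑ k : Fin 2, F (u k) = ∑ k : Fin 2, G k.1 := by
      refine Finset.sum_congr rfl fun k _ => ?_
      by_cases hk : (k : ℕ) < d
      · simp [u, G, dif_pos hk]
      · simp [u, G, dif_neg hk, hF0]
    have h2 : ∑ k : Fin 2, G k.1 = ∑ n ∈ Finset.range 2, G n := Fin.sum_univ_eq_sum_range G 2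
    have h3 : ∑ n ∈ Finset.range d, G n = ∑ n ∈ Finset.range 2, G n := by
      refine Finset.sum_subset (Finset.range_subset_range.mpr hW) fun n _ hn => ?_
      rw [Finset.mem_range, not_lt] at hn
      exact dif_neg (by omega)
    have h4 : ∑ n ∈ Finset.range d, G n = ∑ i : Fin d, G i.1 :=
      (Fin.sum_univ_eq_sum_range G d).symm
    have h5 : ∑ i : Fin d, G i.1 = ∑ i : Fin d, F ((b i : W) : V) := by
      refine Finset.sum_congr rfl fun i _ => ?_
      rw [hG]
      simp only [dif_pos i.2, Fin.eta]
    calc ∑ k : Fin 2, (⟪u k, x⟫_ℂ) • u k = ∑ k : Fin 2, F (u k) := rfl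
      _ = ∑ i : Fin d, F ((b i : W) : V) := by rw [h1, h2, ← h3, h4, h5]
      _ = x := hrep'
  let w : Fin 2 → EuclideanSpace ℂ (Fin n₂) :=
    fun k => WithLp.toLp 2 (fun j => ⟪u k, cols j⟫_ℂ : Fin n₂ → ℂ)
  refine ⟨u, w, ?_, hu, ?_⟩
  · intro i j
    have := congrArg (fun v : V => v i) (key (cols j) (hcols j)).symm
    rw [show X i j = cols j i from rfl, this]
    rw [show (∑ k : Fin 2, (⟪u k, cols j⟫_ℂ) • u k) i
        = ∑ k : Fin 2, ((⟪u k, cols j⟫_ℂ) • u k) i by rw [WithLp.ofLp_sum, Finset.sum_apply]]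
    refine Finset.sum_congr rfl fun k _ => ?_
    show (⟪u k, cols j⟫_ℂ) * u k i = u k i * w k j
    rw [mul_comm]
  · intro k
    rw [EuclideanSpace.norm_eq]
    have hterm : ∀ j, ‖w k j‖ ^ 2 ≤ ∑ i, ‖X i j‖ ^ 2 := by
      intro j
      have h1 : ‖w k j‖ ≤ ‖u k‖ * ‖cols j‖ := norm_inner_le_norm (u k) (cols j)
      have h2 : ‖cols j‖ = Real.sqrt (∑ i, ‖X i j‖ ^ 2) := by
        rw [EuclideanSpace.norm_eq]
      have h3 : ‖w k j‖ ≤ Real.sqrt (∑ i, ‖X i j‖ ^ 2) := by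
        calc ‖w k j‖ ≤ ‖u k‖ * ‖cols j‖ := h1
          _ ≤ 1 * ‖cols j‖ :=
              mul_le_mul_of_nonneg_right (hu k) (norm_nonneg _)
          _ = Real.sqrt (∑ i, ‖X i j‖ ^ 2) := by rw [one_mul, h2]
      have h4 : (0:ℝ) ≤ ∑ i, ‖X i j‖ ^ 2 := Finset.sum_nonneg fun i _ => by positivity
      calc ‖w k j‖ ^ 2 ≤ Real.sqrt (∑ i, ‖X i j‖ ^ 2) ^ 2 := by
            apply sq_le_sq' _ h3
            nlinarith [norm_nonneg (w k j), Real.sqrt_nonneg (∑ i, ‖X i j‖ ^ 2)]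
        _ = ∑ i, ‖X i j‖ ^ 2 := Real.sq_sqrt h4
    have : (∑ j, ‖w k j‖ ^ 2) ≤ ∑ j, ∑ i, ‖X i j‖ ^ 2 :=
      Finset.sum_le_sum fun j _ => hterm j
    rw [show frob X = Real.sqrt (∑ j, ∑ i, ‖X i j‖ ^ 2) by rw [frob, Finset.sum_comm]]
    exact Real.sqrt_le_sqrt this

theorem stmt16 (n₁ n₂ m : ℕ) (hn₁ : 2 ≤ n₁) (hn₂ : 2 ≤ n₂)
    (M : Matrix (Fin n₁) (Fin n₂) ℂ →ₗ[ℂ] (Fin m → ℂ)) :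
    Set.InjOn M {X : Matrix (Fin n₁) (Fin n₂) ℂ | X.rank ≤ 1} ↔
      ∃ C : ℝ, 0 < C ∧ ∀ X : Matrix (Fin n₁) (Fin n₂) ℂ, X.rank ≤ 2 →
        C * frob X ≤ l2 (M X) := by
  constructor
  · -- hard direction
    intro hInj
    set P := Fin 2 → (EuclideanSpace ℂ (Fin n₁) × EuclideanSpace ℂ (Fin n₂)) with hP
    let g : P → Matrix (Fin n₁) (Fin n₂) ℂ :=
      fun p => Matrix.of fun i j => ∑ k, (p k).1 i * (p k).2 j
    have hg : Continuous g := by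
      apply continuous_pi; intro i; apply continuous_pi; intro j
      show Continuous fun p : P => ∑ k : Fin 2, (p k).1 i * (p k).2 j
      apply continuous_finset_sum
      intro k _
      exact ((PiLp.continuous_apply (p := 2) (β := fun _ : Fin n₁ => ℂ) (i := i)).comp (continuous_fst.comp (continuous_apply k))).mul
        ((PiLp.continuous_apply (p := 2) (β := fun _ : Fin n₂ => ℂ) (i := j)).comp (continuous_snd.comp (continuous_apply k)))
    have hgrank : ∀ p : P, (g p).rank ≤ 2 := by
      intro p
      have hsplit : g p = (Matrix.of fun i j => (p 0).1 i * (p 0).2 j)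
          + (Matrix.of fun i j => (p 1).1 i * (p 1).2 j) := by
        ext i j
        simp [g, Fin.sum_univ_two]
      rw [hsplit]
      calc ((Matrix.of fun i j => (p 0).1 i * (p 0).2 j)
            + (Matrix.of fun i j => (p 1).1 i * (p 1).2 j)).rank
          ≤ (Matrix.of fun i j => (p 0).1 i * (p 0).2 j).rank
            + (Matrix.of fun i j => (p 1).1 i * (p 1).2 j).rank := rank_add_le' _ _
        _ ≤ 1 + 1 := add_le_add (rank_outer_le _ _) (rank_outer_le _ _)
    have hMg : ∀ p : P, M (g p) = 0 → g p = 0 := by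
      intro p hp
      have hA : (Matrix.of fun i j => (p 0).1 i * (p 0).2 j).rank ≤ 1 := rank_outer_le _ _
      have hB : (Matrix.of fun i j => (-(p 1).1) i * (p 1).2 j).rank ≤ 1 := rank_outer_le _ _
      have hsplit : g p = (Matrix.of fun i j => (p 0).1 i * (p 0).2 j)
          - (Matrix.of fun i j => (-(p 1).1) i * (p 1).2 j) := by
        ext i j
        simp only [g, Matrix.of_apply, Fin.sum_univ_two, Matrix.sub_apply,
          PiLp.neg_apply]
        ring
      have hMeq : M (Matrix.of fun i j => (p 0).1 i * (p 0).2 j)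
          = M (Matrix.of fun i j => (-(p 1).1) i * (p 1).2 j) := by
        have := hp
        rw [hsplit, map_sub, sub_eq_zero] at this
        exact this
      have := hInj (Set.mem_setOf.mpr hA) (Set.mem_setOf.mpr hB) hMeq
      rw [hsplit, this, sub_self]
    -- the compact set
    set K : Set P := Metric.closedBall 0 1 with hK
    have hKcomp : IsCompact K := isCompact_closedBall _ _
    have hfrobcont : Continuous fun X : Matrix (Fin n₁) (Fin n₂) ℂ => frob X := continuous_frob
    set T : Set (Matrix (Fin n₁) (Fin n₂) ℂ) :=
      (g '' K) ∩ {X | frob X = 1} with hT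
    have hTcomp : IsCompact T :=
      (hKcomp.image hg).inter_right (isClosed_eq hfrobcont continuous_const)
    -- nonempty
    have hTne : T.Nonempty := by
      set p₁ : P := ![(EuclideanSpace.single ⟨0, by omega⟩ (1:ℂ),
        EuclideanSpace.single ⟨0, by omega⟩ (1:ℂ)), (0, 0)] with hp₁
      refine ⟨g p₁, ⟨p₁, ?_, rfl⟩, ?_⟩
      · rw [hK, Metric.mem_closedBall, dist_zero_right]
        apply pi_norm_le_iff_of_nonneg zero_le_one |>.mpr
        intro k
        fin_cases k
        · rw [hp₁]
          simp only [Matrix.cons_val_zero, Prod.norm_def]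
          simp [EuclideanSpace.norm_single]
        · rw [hp₁]
          simp [Prod.norm_def]
      · show frob _ = 1
        rw [frob]
        have hentry : ∀ i j, ‖(g p₁) i j‖ ^ 2
            = if i = ⟨0, by omega⟩ ∧ j = ⟨0, by omega⟩ then 1 else 0 := by
          intro i j
          simp only [g, Matrix.of_apply, Fin.sum_univ_two, hp₁,
            Matrix.cons_val_zero, Matrix.cons_val_one, Matrix.head_cons,
            Prod.fst_zero, Prod.snd_zero, PiLp.zero_apply, zero_mul, add_zero]
          rw [EuclideanSpace.single_apply, EuclideanSpace.single_apply]
          by_cases hi : i = ⟨0, by omega⟩ <;> by_cases hj : j = ⟨0, by omega⟩ <;>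
            simp [hi, hj]
        rw [Finset.sum_congr rfl fun i _ => Finset.sum_congr rfl fun j _ => hentry i j]
        rw [Finset.sum_eq_single ⟨0, by omega⟩]
        · rw [Finset.sum_eq_single ⟨0, by omega⟩]
          · simp
          · intro j _ hj; simp [hj]
          · intro h; exact absurd (Finset.mem_univ _) h
        · intro i _ hi
          apply Finset.sum_eq_zero
          intro j _
          simp [hi]
        · intro h; exact absurd (Finset.mem_univ _) h
    have hcont : Continuous fun X : Matrix (Fin n₁) (Fin n₂) ℂ => l2 (M X) :=
      continuous_l2.comp M.continuous_of_finiteDimensional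
    obtain ⟨X₀, hX₀T, hmin'⟩ := hTcomp.exists_isMinOn hTne hcont.continuousOn
    have hmin : ∀ Y ∈ T, l2 (M X₀) ≤ l2 (M Y) := fun Y hY => hmin' hY
    set C := l2 (M X₀) with hC
    have hX₀ne : X₀ ≠ 0 := by
      intro h0
      have := hX₀T.2
      rw [Set.mem_setOf, h0] at this
      simp [frob] at this
    have hCpos : 0 < C := by
      rcases hX₀T.1 with ⟨p, _, rfl⟩
      have hne : M (g p) ≠ 0 := fun h => hX₀ne (hMg p h)
      have : C ≠ 0 := fun h => hne ((l2_eq_zero_iff _).mp h)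
      exact lt_of_le_of_ne (l2_nonneg _) (Ne.symm this)
    refine ⟨C, hCpos, ?_⟩
    intro X hrk
    by_cases hX : X = 0
    · rw [hX]
      simp [frob, l2_nonneg]
    · have htpos : 0 < frob X := by
        rcases lt_or_eq_of_le (frob_nonneg X) with h | h
        · exact h
        · exact absurd ((frob_eq_zero_iff X).mp h.symm) hX
      set t := frob X with ht
      obtain ⟨u, w, hdec, hu, hw⟩ := decomp X hrk
      set c : ℂ := ((t⁻¹ : ℝ) : ℂ) with hc
      set p : P := fun k => (u k, c • w k) with hp2
      have hpK : p ∈ K := by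
        rw [hK, Metric.mem_closedBall, dist_zero_right]
        apply pi_norm_le_iff_of_nonneg zero_le_one |>.mpr
        intro k
        rw [hp2, Prod.norm_def]
        apply max_le (hu k)
        rw [norm_smul, hc, Complex.norm_real, Real.norm_eq_abs,
          abs_of_nonneg (inv_nonneg.mpr htpos.le)]
        calc t⁻¹ * ‖w k‖ ≤ t⁻¹ * t :=
              mul_le_mul_of_nonneg_left (hw k) (inv_nonneg.mpr htpos.le)
          _ = 1 := inv_mul_cancel₀ htpos.ne'
      have hgp : g p = c • X := by
        ext i j
        simp only [g, Matrix.of_apply, Matrix.smul_apply, hp2, PiLp.smul_apply,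
          smul_eq_mul]
        rw [hdec i j, Finset.mul_sum]
        exact Finset.sum_congr rfl fun k _ => by ring
      have hfr1 : frob (g p) = 1 := by
        rw [hgp, frob_smul, hc, Complex.norm_real, Real.norm_eq_abs,
          abs_of_nonneg (inv_nonneg.mpr htpos.le), ← ht, inv_mul_cancel₀ htpos.ne']
      have hmem : g p ∈ T := ⟨⟨p, hpK, rfl⟩, hfr1⟩
      have h1 : C ≤ l2 (M (g p)) := hmin _ hmem
      rw [hgp, map_smul, l2_smul, hc, Complex.norm_real, Real.norm_eq_abs,
        abs_of_nonneg (inv_nonneg.mpr htpos.le)] at h1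
      calc C * t ≤ (t⁻¹ * l2 (M X)) * t := mul_le_mul_of_nonneg_right h1 htpos.le
        _ = l2 (M X) := by field_simp
  · -- easy direction
    rintro ⟨C, hC, hbound⟩ A hA B hB hMeq
    rw [Set.mem_setOf] at hA hB
    have hrk : (A - B).rank ≤ 2 := by
      have hnB : (-B).rank ≤ 1 := by
        have hmv : (-B).mulVecLin = -B.mulVecLin := by
          apply LinearMap.ext
          intro v
          simp [Matrix.mulVecLin_apply, Matrix.neg_mulVec]
        have : (-B).rank = B.rank := by
          rw [Matrix.rank, Matrix.rank, hmv, LinearMap.range_neg]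
        rw [this]; exact hB
      calc (A - B).rank = (A + (-B)).rank := by rw [sub_eq_add_neg]
        _ ≤ A.rank + (-B).rank := rank_add_le' _ _
        _ ≤ 1 + 1 := add_le_add hA hnB
    have h0 : M (A - B) = 0 := by rw [map_sub, hMeq, sub_self]
    have := hbound (A - B) hrk
    rw [h0, l2_zero] at this
    have hfr : frob (A - B) = 0 := by
      nlinarith [frob_nonneg (A - B)]
    have := (frob_eq_zero_iff _).mp hfr
    exact sub_eq_zero.mp this
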